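/- Let Γ be a finite collection of finite sets such that Γ−{S} is an hke collection for each S ∈ Γ (all with the same α). Then there exists an integer m such that for every partition {Γ₁, Γ₂} of Γ into two non-empty subcollections, |⋂Γ₁ − ⋃Γ₂| − |⋂Γ₂ − ⋃Γ₁| = (−1)^{|Γ₁|+1} · m. -/
import Mathlib

open Finset

/-- Union of a finite collection of finite sets. -/
def collU {α : Type*} [DecidableEq α] (Γ : Finset (Finset α)) : Finset α :=
  Γ.sup id

/-- Intersection of a finite collection of finite sets
(equals the usual intersection when the collection is non-empty). -/
def collI {α : Type*} [DecidableEq α] (Γ : Finset (Finset α)) : Finset α :=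
  (Γ.sup id).filter (fun x => ∀ S ∈ Γ, x ∈ S)

/-- `e Γ = |⋃Γ| + |⋂Γ|` as an integer. -/
def collE {α : Type*} [DecidableEq α] (Γ : Finset (Finset α)) : ℤ :=
  (collU Γ).card + (collI Γ).card

/-- `F` is a hereditary König–Egerváry collection with common cardinality `a`. -/
def IsHKE {α : Type*} [DecidableEq α] (F : Finset (Finset α)) (a : ℕ) : Prop :=
  (∀ S ∈ F, S.card = a) ∧
  ∀ Γ ⊆ F, Γ.Nonempty → collE Γ = 2 * (a : ℤ)

section aux
variable {α : Type*} [DecidableEq α]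

lemma mem_collU {Γ : Finset (Finset α)} {x : α} : x ∈ collU Γ ↔ ∃ S ∈ Γ, x ∈ S := by
  simp [collU, Finset.mem_sup]

lemma mem_collI {Γ : Finset (Finset α)} (h : Γ.Nonempty) {x : α} :
    x ∈ collI Γ ↔ ∀ S ∈ Γ, x ∈ S := by
  obtain ⟨T, hT⟩ := h
  simp only [collI, mem_filter, Finset.mem_sup]
  constructor
  · tauto
  · intro hx; exact ⟨⟨T, hT, hx T hT⟩, hx⟩

lemma collU_insert (S : Finset α) (Γ : Finset (Finset α)) :
    collU (insert S Γ) = S ∪ collU Γ := by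
  simp [collU, Finset.sup_insert]

lemma collI_insert (S : Finset α) {Γ : Finset (Finset α)} (h : Γ.Nonempty) :
    collI (insert S Γ) = S ∩ collI Γ := by
  ext x
  rw [mem_collI (Finset.insert_nonempty S Γ), Finset.mem_inter, mem_collI h]
  simp

lemma collU_singleton (S : Finset α) : collU {S} = S := by simp [collU]

lemma collI_singleton (S : Finset α) : collI {S} = S := by
  ext x
  rw [mem_collI (singleton_nonempty S)]
  simp

lemma split_sdiff (X Y S : Finset α) : X \ (S ∪ Y) = (X \ Y) \ S := by
  ext x; simp only [mem_sdiff, mem_union]; tauto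

lemma split_inter (X Y S : Finset α) : (S ∩ X) \ Y = (X \ Y) ∩ S := by
  ext x; simp only [mem_sdiff, mem_inter]; tauto

lemma hke_card {F : Finset (Finset α)} {a : ℕ} (h : IsHKE F a) {Δ : Finset (Finset α)}
    (hΔ : Δ ⊆ F) (hne : Δ.Nonempty) : (collU Δ).card + (collI Δ).card = 2 * a := by
  have := h.2 Δ hΔ hne
  unfold collE at this
  exact_mod_cast this

lemma hke_base {F : Finset (Finset α)} {a : ℕ} (hF : IsHKE F a) {Γ₁ : Finset (Finset α)}
    {T : Finset α} (h1 : Γ₁ ⊆ F) (hne : Γ₁.Nonempty) (hT : T ∈ F) (hTn : T ∉ Γ₁) :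
    (collI Γ₁ \ T).card = (T \ collU Γ₁).card := by
  have e1 := hke_card hF h1 hne
  have e2 := hke_card hF (insert_subset hT h1) (insert_nonempty _ _)
  rw [collU_insert, collI_insert T hne, Finset.inter_comm T (collI Γ₁)] at e2
  have ht : T.card = a := hF.1 T hT
  have c3 := Finset.card_union_add_card_inter T (collU Γ₁)
  have c4 := Finset.card_sdiff_add_card_inter (collI Γ₁) T
  have c5 := Finset.card_sdiff_add_card_inter T (collU Γ₁)
  omega

lemma t213 {F : Finset (Finset α)} {a : ℕ} (hF : IsHKE F a) :
    ∀ Γ₂ Γ₁ : Finset (Finset α), Γ₁ ∪ Γ₂ ⊆ F → Disjoint Γ₁ Γ₂ → Γ₁.Nonempty → Γ₂.Nonempty →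
    (collI Γ₁ \ collU Γ₂).card = (collI Γ₂ \ collU Γ₁).card := by
  intro Γ₂
  induction Γ₂ using Finset.strongInduction with
  | _ Γ₂ IH =>
  intro Γ₁ hsub hdisj h1 h2
  obtain ⟨T, hT⟩ := h2
  have hTF : T ∈ F := hsub (by simp [hT])
  have hTn : T ∉ Γ₁ := fun h => (Finset.disjoint_left.1 hdisj h) hT
  rcases eq_or_ne Γ₂ {T} with rfl | hne
  · rw [collU_singleton, collI_singleton]
    exact hke_base hF (fun x hx => hsub (by simp [hx])) h1 hTF hTn
  · set Γ₂' := Γ₂.erase T with hΓ₂'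
    have h2' : Γ₂'.Nonempty := by
      rw [Finset.nonempty_iff_ne_empty]
      intro h
      rcases (Finset.erase_eq_empty_iff Γ₂ T).1 h with h' | h'
      · exact (Finset.ne_empty_of_mem hT) h'
      · exact hne h'
    have hss : Γ₂' ⊂ Γ₂ := Finset.erase_ssubset hT
    have hins : Γ₂ = insert T Γ₂' := (Finset.insert_erase hT).symm
    have hsubL : Γ₁ ⊆ F := (Finset.union_subset_iff.1 hsub).1
    have hsubR : Γ₂' ⊆ F :=
      (Finset.erase_subset _ _).trans (Finset.union_subset_iff.1 hsub).2
    have hsub1 : Γ₁ ∪ Γ₂' ⊆ F := Finset.union_subset hsubL hsubR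
    have hsub2 : insert T Γ₁ ∪ Γ₂' ⊆ F :=
      Finset.union_subset (insert_subset hTF hsubL) hsubR
    have hd1 : Disjoint Γ₁ Γ₂' := hdisj.mono_right (Finset.erase_subset _ _)
    have hd2 : Disjoint (insert T Γ₁) Γ₂' := by
      rw [Finset.disjoint_left]
      intro x hx hx'
      rcases Finset.mem_insert.1 hx with rfl | hx
      · exact (Finset.notMem_erase x Γ₂) hx'
      · exact (Finset.disjoint_left.1 hd1 hx) hx'
    have IH1 := IH Γ₂' hss Γ₁ hsub1 hd1 h1 h2'
    have IH2 := IH Γ₂' hss (insert T Γ₁) hsub2 hd2 (insert_nonempty _ _) h2'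
    rw [hins, collI_insert T h2', collU_insert, split_sdiff, split_inter]
    rw [collI_insert T h1, collU_insert, split_inter, split_sdiff] at IH2
    have c1 := Finset.card_sdiff_add_card_inter (collI Γ₁ \ collU Γ₂') T
    have c2 := Finset.card_sdiff_add_card_inter (collI Γ₂' \ collU Γ₁) T
    omega

lemma move_lemma {Γ : Finset (Finset α)} {a : ℕ}
    (hhke : ∀ S ∈ Γ, IsHKE (Γ.erase S) a)
    {Γ₁ Γ₂ : Finset (Finset α)} {S : Finset α} (hS : S ∈ Γ) (hU : Γ₁ ∪ Γ₂ = Γ.erase S)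
    (hd : Disjoint Γ₁ Γ₂) (h1 : Γ₁.Nonempty) (h2 : Γ₂.Nonempty) :
    ((collI (insert S Γ₁) \ collU Γ₂).card : ℤ)
      - ((collI Γ₂ \ collU (insert S Γ₁)).card : ℤ)
    = -(((collI Γ₁ \ collU (insert S Γ₂)).card : ℤ)
      - ((collI (insert S Γ₂) \ collU Γ₁).card : ℤ)) := by
  have hF := hhke S hS
  have h213 := t213 hF Γ₂ Γ₁ (hU ▸ subset_rfl) hd h1 h2
  rw [collI_insert S h1, collI_insert S h2, collU_insert, collU_insert,
    split_sdiff, split_inter, split_sdiff, split_inter]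
  have c1 := Finset.card_sdiff_add_card_inter (collI Γ₁ \ collU Γ₂) S
  have c2 := Finset.card_sdiff_add_card_inter (collI Γ₂ \ collU Γ₁) S
  omega

lemma dsing {A B : Finset α} (h : A.card = B.card) : (A \ B).card = (B \ A).card := by
  have c1 := Finset.card_sdiff_add_card_inter A B
  have c2 := Finset.card_sdiff_add_card_inter B A
  rw [Finset.inter_comm] at c2
  omega

end aux

theorem stmt_6 {α : Type*} [DecidableEq α] (Γ : Finset (Finset α))
    (hcard : 2 ≤ Γ.card) (a : ℕ) (ha : 0 < a)
    (hhke : ∀ S ∈ Γ, IsHKE (Γ.erase S) a) :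
    ∃ m : ℤ, ∀ Γ₁ Γ₂ : Finset (Finset α),
      Γ₁ ∪ Γ₂ = Γ → Disjoint Γ₁ Γ₂ → Γ₁.Nonempty → Γ₂.Nonempty →
      ((collI Γ₁ \ collU Γ₂).card : ℤ) - ((collI Γ₂ \ collU Γ₁).card : ℤ)
        = (-1) ^ (Γ₁.card + 1) * m := by
  obtain ⟨T, hT⟩ : Γ.Nonempty := Finset.card_pos.1 (by omega)
  refine ⟨((collI {T} \ collU (Γ.erase T)).card : ℤ)
      - ((collI (Γ.erase T) \ collU {T}).card : ℤ), ?_⟩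
  set m : ℤ := ((collI {T} \ collU (Γ.erase T)).card : ℤ)
      - ((collI (Γ.erase T) \ collU {T}).card : ℤ) with hm
  suffices H : ∀ n (Γ₁ Γ₂ : Finset (Finset α)), Γ₁.card = n →
      Γ₁ ∪ Γ₂ = Γ → Disjoint Γ₁ Γ₂ → Γ₁.Nonempty → Γ₂.Nonempty →
      ((collI Γ₁ \ collU Γ₂).card : ℤ) - ((collI Γ₂ \ collU Γ₁).card : ℤ)
        = (-1) ^ (Γ₁.card + 1) * m by
    intro Γ₁ Γ₂ hU hd h1 h2
    exact H Γ₁.card Γ₁ Γ₂ rfl hU hd h1 h2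
  intro n
  induction n using Nat.strong_induction_on with
  | _ n IH =>
  intro Γ₁ Γ₂ hn hU hd h1 h2
  have hΓ₂ : Γ₂ = Γ \ Γ₁ := by rw [← hU, Finset.union_sdiff_cancel_left hd]
  match n, hn with
  | 0, hn => exact absurd (Finset.card_eq_zero.1 hn) h1.ne_empty
  | 1, hn =>
    obtain ⟨T', rfl⟩ := Finset.card_eq_one.1 hn
    have hT' : T' ∈ Γ := hU ▸ (by simp)
    have hΓ₂' : Γ₂ = Γ.erase T' := by rw [hΓ₂, Finset.erase_eq]
    rcases eq_or_ne T' T with rfl | hne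
    · rw [hΓ₂', Finset.card_singleton, hm]; ring
    · rcases eq_or_lt_of_le hcard with hc2 | hc3
      · -- |Γ| = 2 : both sides are 0
        have hc : (Γ.erase T').card = 1 := by rw [Finset.card_erase_of_mem hT']; omega
        obtain ⟨B, hB⟩ := Finset.card_eq_one.1 hc
        have hBe : B ∈ Γ.erase T' := hB ▸ Finset.mem_singleton_self B
        have hBΓ : B ∈ Γ := (Finset.erase_subset T' Γ) hBe
        have hBne : B ≠ T' := (Finset.mem_erase.1 hBe).1
        have hcT : (Γ.erase T).card = 1 := by rw [Finset.card_erase_of_mem hT]; omega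
        obtain ⟨B', hB'⟩ := Finset.card_eq_one.1 hcT
        have hB'e : B' ∈ Γ.erase T := hB' ▸ Finset.mem_singleton_self B'
        have hB'Γ : B' ∈ Γ := (Finset.erase_subset T Γ) hB'e
        have hB'ne : B' ≠ T := (Finset.mem_erase.1 hB'e).1
        have cardmem : ∀ X Y : Finset α, X ∈ Γ → Y ∈ Γ → X ≠ Y → X.card = a := by
          intro X Y hX hY hXY
          exact (hhke Y hY).1 X (Finset.mem_erase.2 ⟨hXY, hX⟩)
        have hd1 : (T' \ B).card = (B \ T').card :=
          dsing (by rw [cardmem T' B hT' hBΓ (Ne.symm hBne), cardmem B T' hBΓ hT' hBne])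
        have hd2 : (T \ B').card = (B' \ T).card :=
          dsing (by rw [cardmem T B' hT hB'Γ (Ne.symm hB'ne), cardmem B' T hB'Γ hT hB'ne])
        rw [hΓ₂', hB, hm, hB']
        simp only [collI_singleton, collU_singleton]
        rw [hd1, hd2, Finset.card_singleton]
        ring
      · -- |Γ| ≥ 3
        have hTΓ₂ : T ∈ Γ.erase T' := Finset.mem_erase.2 ⟨Ne.symm hne, hT⟩
        set Δ : Finset (Finset α) := (Γ.erase T').erase T with hΔ
        have hΔne : Δ.Nonempty := by
          rw [← Finset.card_pos, hΔ, Finset.card_erase_of_mem hTΓ₂,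
            Finset.card_erase_of_mem hT']
          omega
        have hins1 : insert T Δ = Γ.erase T' := by
          rw [hΔ]; exact Finset.insert_erase hTΓ₂
        have hins2 : insert T' Δ = Γ.erase T := by
          rw [hΔ, Finset.erase_right_comm]
          exact Finset.insert_erase (Finset.mem_erase.2 ⟨hne, hT'⟩)
        have hU1 : {T'} ∪ Δ = Γ.erase T := by rw [← Finset.insert_eq, hins2]
        have hd1 : Disjoint {T'} Δ := by
          rw [Finset.disjoint_singleton_left, hΔ, Finset.erase_right_comm]
          exact Finset.notMem_erase T' _
        have step1 := move_lemma hhke hT hU1 hd1 (Finset.singleton_nonempty T') hΔne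
        have hU2 : {T} ∪ Δ = Γ.erase T' := by rw [← Finset.insert_eq, hins1]
        have hd2 : Disjoint {T} Δ := by
          rw [Finset.disjoint_singleton_left, hΔ]
          exact Finset.notMem_erase T _
        have step2 := move_lemma hhke hT' hU2 hd2 (Finset.singleton_nonempty T) hΔne
        have hpair : insert T {T'} = insert T' ({T} : Finset (Finset α)) :=
          Finset.pair_comm T T'
        rw [← hpair] at step2
        rw [hins2] at step2
        rw [hins1] at step1
        -- step1 : d({T,T'}, Δ) = -d({T'}, Γ.erase T')
        -- step2 : d({T,T'}, Δ) = -d({T}, Γ.erase T) = -m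
        rw [hΓ₂', Finset.card_singleton, hm]
        norm_num
        linarith [step1, step2]
  | (n+2), hn =>
    obtain ⟨S, hSΓ₁⟩ : Γ₁.Nonempty := h1
    have hSΓ : S ∈ Γ := hU ▸ Finset.mem_union_left _ hSΓ₁
    set Γ₁' := Γ₁.erase S with hΓ₁'
    have h1' : Γ₁'.Nonempty := by
      rw [← Finset.card_pos, hΓ₁', Finset.card_erase_of_mem hSΓ₁, hn]; omega
    have hSn2 : S ∉ Γ₂ := fun h => (Finset.disjoint_left.1 hd hSΓ₁) h
    have hU' : Γ₁' ∪ Γ₂ = Γ.erase S := by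
      rw [← hU, Finset.erase_union_distrib, Finset.erase_eq_of_notMem hSn2]
    have hd' : Disjoint Γ₁' Γ₂ := hd.mono_left (Finset.erase_subset _ _)
    have hmv := move_lemma hhke hSΓ hU' hd' h1' h2
    rw [Finset.insert_erase hSΓ₁] at hmv
    have hU'' : Γ₁' ∪ insert S Γ₂ = Γ := by
      rw [Finset.union_insert, hU']
      exact Finset.insert_erase hSΓ
    have hd'' : Disjoint Γ₁' (insert S Γ₂) := by
      rw [Finset.disjoint_insert_right]
      exact ⟨Finset.notMem_erase S Γ₁, hd'⟩
    have hcard' : Γ₁'.card = n + 1 := by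
      rw [hΓ₁', Finset.card_erase_of_mem hSΓ₁, hn]; omega
    have hIH := IH (n+1) (by omega) Γ₁' (insert S Γ₂) hcard' hU'' hd'' h1'
      (Finset.insert_nonempty _ _)
    rw [hcard'] at hIH
    rw [hn, hmv, hIH]
    ring
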